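/- Let k ≥ 1, m ≥ 1 and n ≥ 1 be integers and let C be a linear code of length n over R_{k,m}. Then the Gray map φ_{km} is injective and F_2-linear, φ_{km}(C^⊥) = φ_{km}(C)^⊥ (dual taken in F_2^{kmn} with the standard dot product), and in particular if C is self-dual over R_{k,m}, then φ_{km}(C) is a binary self-dual code of length kmn whose Hamming weight distribution equals the Lee weight distribution of C. -/

import Mathlib

open MvPolynomial

set_option synthInstance.maxHeartbeats 1000000
set_option maxHeartbeats 1000000

/-- The ring `R_{k,m} = F_2[u,v]/⟨u^k, v^m⟩`. -/
noncomputable abbrev Rkm (k m : ℕ) : Type :=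
  MvPolynomial (Fin 2) (ZMod 2) ⧸
    (Ideal.span {(X 0 : MvPolynomial (Fin 2) (ZMod 2)) ^ k, (X 1 : MvPolynomial (Fin 2) (ZMod 2)) ^ m})

/-- `u`, the image of `X 0` in `R_{k,m}`. -/
noncomputable def Rkm.u (k m : ℕ) : Rkm k m := Ideal.Quotient.mk _ (X 0)

/-- `v`, the image of `X 1` in `R_{k,m}`. -/
noncomputable def Rkm.v (k m : ℕ) : Rkm k m := Ideal.Quotient.mk _ (X 1)

/-- The `t`-th Gray interval (0-indexed): `I_{2s+1} = {s,…,k-1-s}` and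
`I_{2s+2} = {s+1,…,k-1-s}`, i.e. `I_{t+1} = {⌈(t+1)/2⌉,…,k-1-⌊t/2⌋}` for `t = 0,…,k-1`. -/
def grayInterval (k : ℕ) (t : Fin k) : Finset (Fin k) :=
  Finset.univ.filter fun i : Fin k => ((t : ℕ) + 1) / 2 ≤ (i : ℕ) ∧ (i : ℕ) ≤ k - 1 - (t : ℕ) / 2

namespace GrayAux

lemma u_pow (k m : ℕ) : Rkm.u k m ^ k = 0 := by
  rw [Rkm.u, ← map_pow, Ideal.Quotient.eq_zero_iff_mem]
  exact Ideal.subset_span (by simp)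

lemma v_pow (k m : ℕ) : Rkm.v k m ^ m = 0 := by
  rw [Rkm.v, ← map_pow, Ideal.Quotient.eq_zero_iff_mem]
  exact Ideal.subset_span (by simp)

variable {k m : ℕ} (B : Module.Basis (Fin k × Fin m) (ZMod 2) (Rkm k m))

lemma basis_mul (hB : ∀ p : Fin k × Fin m, B p = Rkm.u k m ^ (p.1 : ℕ) * Rkm.v k m ^ (p.2 : ℕ)) (p p' : Fin k × Fin m) :
    B p * B p' = if h : (p.1 : ℕ) + (p'.1 : ℕ) < k ∧ (p.2 : ℕ) + (p'.2 : ℕ) < m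
      then B (⟨(p.1 : ℕ) + (p'.1 : ℕ), h.1⟩, ⟨(p.2 : ℕ) + (p'.2 : ℕ), h.2⟩) else 0 := by
  rw [hB, hB]
  split_ifs with h
  · rw [hB]
    simp only [pow_add]
    ring
  · push_neg at h
    by_cases hu : k ≤ (p.1 : ℕ) + (p'.1 : ℕ)
    · have h0 : Rkm.u k m ^ ((p.1 : ℕ) + (p'.1 : ℕ)) = 0 := by
        calc Rkm.u k m ^ ((p.1 : ℕ) + (p'.1 : ℕ))
            = Rkm.u k m ^ k * Rkm.u k m ^ ((p.1 : ℕ) + (p'.1 : ℕ) - k) := by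
              rw [← pow_add]; congr 1; omega
          _ = 0 := by rw [u_pow, zero_mul]
      calc Rkm.u k m ^ (p.1 : ℕ) * Rkm.v k m ^ (p.2 : ℕ) *
            (Rkm.u k m ^ (p'.1 : ℕ) * Rkm.v k m ^ (p'.2 : ℕ))
          = Rkm.u k m ^ ((p.1 : ℕ) + (p'.1 : ℕ)) *
            (Rkm.v k m ^ (p.2 : ℕ) * Rkm.v k m ^ (p'.2 : ℕ)) := by rw [pow_add]; ring
        _ = 0 := by rw [h0, zero_mul]
    · have hv : m ≤ (p.2 : ℕ) + (p'.2 : ℕ) := h (by omega)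
      have h0 : Rkm.v k m ^ ((p.2 : ℕ) + (p'.2 : ℕ)) = 0 := by
        calc Rkm.v k m ^ ((p.2 : ℕ) + (p'.2 : ℕ))
            = Rkm.v k m ^ m * Rkm.v k m ^ ((p.2 : ℕ) + (p'.2 : ℕ) - m) := by
              rw [← pow_add]; congr 1; omega
          _ = 0 := by rw [v_pow, zero_mul]
      calc Rkm.u k m ^ (p.1 : ℕ) * Rkm.v k m ^ (p.2 : ℕ) *
            (Rkm.u k m ^ (p'.1 : ℕ) * Rkm.v k m ^ (p'.2 : ℕ))
          = Rkm.v k m ^ ((p.2 : ℕ) + (p'.2 : ℕ)) *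
            (Rkm.u k m ^ (p.1 : ℕ) * Rkm.u k m ^ (p'.1 : ℕ)) := by rw [pow_add]; ring
        _ = 0 := by rw [h0, zero_mul]

noncomputable def sig : Rkm k m →ₗ[ZMod 2] ZMod 2 where
  toFun x := ∑ p, B.repr x p
  map_add' x y := by simp [Finset.sum_add_distrib]
  map_smul' c x := by simp [Finset.mul_sum]

lemma sig_basis (p : Fin k × Fin m) : sig B (B p) = 1 := by
  simp [sig, Module.Basis.repr_self, Finsupp.single_apply]

lemma sig_mul (hB : ∀ p : Fin k × Fin m, B p = Rkm.u k m ^ (p.1 : ℕ) * Rkm.v k m ^ (p.2 : ℕ)) (x y : Rkm k m) :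
    sig B (x * y) = ∑ p : Fin k × Fin m, ∑ p' : Fin k × Fin m,
      B.repr x p * B.repr y p' *
        (if (p.1 : ℕ) + (p'.1 : ℕ) < k ∧ (p.2 : ℕ) + (p'.2 : ℕ) < m then 1 else 0) := by
  conv_lhs => rw [← B.sum_repr x, ← B.sum_repr y]
  rw [Finset.sum_mul_sum, map_sum]
  refine Finset.sum_congr rfl fun p _ => ?_
  rw [map_sum]
  refine Finset.sum_congr rfl fun p' _ => ?_
  rw [smul_mul_smul_comm, map_smul, smul_eq_mul, basis_mul B hB]
  split_ifs with h
  · rw [sig_basis, mul_one]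
  · rw [map_zero, mul_zero]


lemma mem_grayInterval {k : ℕ} {t i : Fin k} :
    i ∈ grayInterval k t ↔ ((t : ℕ) + 1) / 2 ≤ (i : ℕ) ∧ (i : ℕ) ≤ k - 1 - (t : ℕ) / 2 := by
  simp [grayInterval]

lemma natCast_zmod2 (a : ℕ) : ((a : ZMod 2) = if a % 2 = 1 then 1 else 0) := by
  conv_lhs => rw [← Nat.mod_add_div a 2]
  have h2 : (2 : ZMod 2) = 0 := by decide
  rcases Nat.mod_two_eq_zero_or_one a with h | h <;> push_cast <;> simp [h, h2]

lemma gray_count (k : ℕ) (i i' : Fin k) :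
    (∑ t : Fin k, if i ∈ grayInterval k t ∧ i' ∈ grayInterval k t then (1 : ZMod 2) else 0)
      = if (i : ℕ) + (i' : ℕ) < k then 1 else 0 := by
  have hi := i.isLt; have hi' := i'.isLt
  set M : ℕ := min (2 * min (i : ℕ) (i' : ℕ)) (2 * (k - 1 - max (i : ℕ) (i' : ℕ)) + 1) with hMdef
  have hMk : M < k := by omega
  have hcond : ∀ t : Fin k, (i ∈ grayInterval k t ∧ i' ∈ grayInterval k t) ↔ (t : ℕ) ≤ M := by
    intro t
    rw [mem_grayInterval, mem_grayInterval]
    have ht := t.isLt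
    omega
  calc (∑ t : Fin k, if i ∈ grayInterval k t ∧ i' ∈ grayInterval k t then (1 : ZMod 2) else 0)
      = ∑ t : Fin k, (if (t : ℕ) ≤ M then (1 : ZMod 2) else 0) := by
        exact Finset.sum_congr rfl fun t _ => if_congr (hcond t) rfl rfl
    _ = ∑ t ∈ Finset.range k, (if t ≤ M then (1 : ZMod 2) else 0) := by
        rw [Fin.sum_univ_eq_sum_range (fun t => if t ≤ M then (1 : ZMod 2) else 0) k]
    _ = ∑ t ∈ Finset.range k, (if t ∈ Finset.range (M + 1) then (1 : ZMod 2) else 0) := by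
        refine Finset.sum_congr rfl fun t _ => ?_
        exact if_congr (by rw [Finset.mem_range]; omega) rfl rfl
    _ = ∑ t ∈ Finset.range k ∩ Finset.range (M + 1), (1 : ZMod 2) := by
        rw [Finset.sum_ite_mem]
    _ = ((M + 1 : ℕ) : ZMod 2) := by
        rw [Finset.sum_const, show Finset.range k ∩ Finset.range (M + 1) = Finset.range (M + 1) by
          ext x; simp; omega]
        simp [Finset.card_range]
    _ = if (i : ℕ) + (i' : ℕ) < k then 1 else 0 := by
        rw [natCast_zmod2]
        have : (M + 1) % 2 = 1 ↔ (i : ℕ) + (i' : ℕ) < k := by omega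
        simp only [this]

noncomputable def F (x : Rkm k m) (t : Fin m × Fin k) : ZMod 2 :=
  ∑ j ∈ grayInterval m t.1, ∑ i ∈ grayInterval k t.2, B.repr x (i, j)

lemma F_eq (x : Rkm k m) (t : Fin m × Fin k) :
    F B x t = ∑ p : Fin k × Fin m,
      (if p.1 ∈ grayInterval k t.2 ∧ p.2 ∈ grayInterval m t.1 then (1 : ZMod 2) else 0)
        * B.repr x p := by
  have h1 : ∀ i : Fin k, (∑ j : Fin m,
      (if i ∈ grayInterval k t.2 ∧ j ∈ grayInterval m t.1 then (1 : ZMod 2) else 0)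
        * B.repr x (i, j))
      = if i ∈ grayInterval k t.2 then ∑ j ∈ grayInterval m t.1, B.repr x (i, j) else 0 := by
    intro i
    split_ifs with h
    · rw [← Finset.univ_inter (grayInterval m t.1), ← Finset.sum_ite_mem]
      exact Finset.sum_congr rfl fun j _ => by by_cases hj : j ∈ grayInterval m t.1 <;> simp [h, hj]
    · exact Finset.sum_eq_zero fun j _ => by simp [h]
  rw [F, Finset.sum_comm, Fintype.sum_prod_type]
  simp only [h1]
  rw [Finset.sum_ite_mem, Finset.univ_inter]

lemma F_inner (hB : ∀ p : Fin k × Fin m, B p = Rkm.u k m ^ (p.1 : ℕ) * Rkm.v k m ^ (p.2 : ℕ))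
    (x y : Rkm k m) :
    ∑ t : Fin m × Fin k, F B x t * F B y t = sig B (x * y) := by
  have key : ∀ p p' : Fin k × Fin m,
      (∑ t : Fin m × Fin k,
        (if p.1 ∈ grayInterval k t.2 ∧ p.2 ∈ grayInterval m t.1 then (1 : ZMod 2) else 0)
          * (if p'.1 ∈ grayInterval k t.2 ∧ p'.2 ∈ grayInterval m t.1 then (1 : ZMod 2) else 0))
      = if (p.1 : ℕ) + (p'.1 : ℕ) < k ∧ (p.2 : ℕ) + (p'.2 : ℕ) < m then 1 else 0 := by
    intro p p'
    have hsplit : ∀ tm : Fin m, ∀ tk : Fin k,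
        (if p.1 ∈ grayInterval k tk ∧ p.2 ∈ grayInterval m tm then (1 : ZMod 2) else 0)
          * (if p'.1 ∈ grayInterval k tk ∧ p'.2 ∈ grayInterval m tm then (1 : ZMod 2) else 0)
        = (if p.2 ∈ grayInterval m tm ∧ p'.2 ∈ grayInterval m tm then (1 : ZMod 2) else 0)
          * (if p.1 ∈ grayInterval k tk ∧ p'.1 ∈ grayInterval k tk then (1 : ZMod 2) else 0) := by
      intro tm tk
      split_ifs <;> simp_all
    calc (∑ t : Fin m × Fin k,
        (if p.1 ∈ grayInterval k t.2 ∧ p.2 ∈ grayInterval m t.1 then (1 : ZMod 2) else 0)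
          * (if p'.1 ∈ grayInterval k t.2 ∧ p'.2 ∈ grayInterval m t.1 then (1 : ZMod 2) else 0))
        = ∑ tm : Fin m, ∑ tk : Fin k,
            (if p.2 ∈ grayInterval m tm ∧ p'.2 ∈ grayInterval m tm then (1 : ZMod 2) else 0)
            * (if p.1 ∈ grayInterval k tk ∧ p'.1 ∈ grayInterval k tk then (1 : ZMod 2) else 0) := by
          rw [Fintype.sum_prod_type]
          exact Finset.sum_congr rfl fun tm _ => Finset.sum_congr rfl fun tk _ => hsplit tm tk
      _ = (∑ tm : Fin m, if p.2 ∈ grayInterval m tm ∧ p'.2 ∈ grayInterval m tm then (1 : ZMod 2) else 0)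
            * (∑ tk : Fin k, if p.1 ∈ grayInterval k tk ∧ p'.1 ∈ grayInterval k tk then (1 : ZMod 2) else 0) := by
          rw [Finset.sum_mul_sum]
      _ = (if (p.2 : ℕ) + (p'.2 : ℕ) < m then 1 else 0)
            * (if (p.1 : ℕ) + (p'.1 : ℕ) < k then 1 else 0) := by
          rw [gray_count, gray_count]
      _ = if (p.1 : ℕ) + (p'.1 : ℕ) < k ∧ (p.2 : ℕ) + (p'.2 : ℕ) < m then 1 else 0 := by
          split_ifs <;> simp_all
  rw [sig_mul B hB]
  calc ∑ t : Fin m × Fin k, F B x t * F B y t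
      = ∑ t : Fin m × Fin k,
          (∑ p : Fin k × Fin m,
            (if p.1 ∈ grayInterval k t.2 ∧ p.2 ∈ grayInterval m t.1 then (1 : ZMod 2) else 0)
              * B.repr x p)
          * (∑ p' : Fin k × Fin m,
            (if p'.1 ∈ grayInterval k t.2 ∧ p'.2 ∈ grayInterval m t.1 then (1 : ZMod 2) else 0)
              * B.repr y p') := by
        exact Finset.sum_congr rfl fun t _ => by rw [F_eq, F_eq]
    _ = ∑ t : Fin m × Fin k, ∑ p : Fin k × Fin m, ∑ p' : Fin k × Fin m,
          ((if p.1 ∈ grayInterval k t.2 ∧ p.2 ∈ grayInterval m t.1 then (1 : ZMod 2) else 0)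
              * B.repr x p)
          * ((if p'.1 ∈ grayInterval k t.2 ∧ p'.2 ∈ grayInterval m t.1 then (1 : ZMod 2) else 0)
              * B.repr y p') := by
        exact Finset.sum_congr rfl fun t _ => Finset.sum_mul_sum _ _ _ _
    _ = ∑ p : Fin k × Fin m, ∑ p' : Fin k × Fin m, ∑ t : Fin m × Fin k,
          ((if p.1 ∈ grayInterval k t.2 ∧ p.2 ∈ grayInterval m t.1 then (1 : ZMod 2) else 0)
              * B.repr x p)
          * ((if p'.1 ∈ grayInterval k t.2 ∧ p'.2 ∈ grayInterval m t.1 then (1 : ZMod 2) else 0)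
              * B.repr y p') := by
        rw [Finset.sum_comm]
        exact Finset.sum_congr rfl fun p _ => Finset.sum_comm
    _ = ∑ p : Fin k × Fin m, ∑ p' : Fin k × Fin m,
          (B.repr x p * B.repr y p') * ∑ t : Fin m × Fin k,
            (if p.1 ∈ grayInterval k t.2 ∧ p.2 ∈ grayInterval m t.1 then (1 : ZMod 2) else 0)
            * (if p'.1 ∈ grayInterval k t.2 ∧ p'.2 ∈ grayInterval m t.1 then (1 : ZMod 2) else 0) := by
        refine Finset.sum_congr rfl fun p _ => Finset.sum_congr rfl fun p' _ => ?_
        rw [Finset.mul_sum]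
        exact Finset.sum_congr rfl fun t _ => by ring
    _ = ∑ p : Fin k × Fin m, ∑ p' : Fin k × Fin m,
          B.repr x p * B.repr y p' *
            (if (p.1 : ℕ) + (p'.1 : ℕ) < k ∧ (p.2 : ℕ) + (p'.2 : ℕ) < m then 1 else 0) := by
        refine Finset.sum_congr rfl fun p _ => Finset.sum_congr rfl fun p' _ => ?_
        rw [key, mul_assoc]

lemma sig_nondeg (hB : ∀ p : Fin k × Fin m, B p = Rkm.u k m ^ (p.1 : ℕ) * Rkm.v k m ^ (p.2 : ℕ))
    (x : Rkm k m) (H : ∀ y, sig B (x * y) = 0) : x = 0 := by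
  have hT : ∀ q : Fin k × Fin m,
      (∑ p : Fin k × Fin m, B.repr x p *
        (if (p.1 : ℕ) + (q.1 : ℕ) < k ∧ (p.2 : ℕ) + (q.2 : ℕ) < m then (1 : ZMod 2) else 0)) = 0 := by
    intro q
    have h := H (B q)
    rw [sig_mul B hB] at h
    calc (∑ p : Fin k × Fin m, B.repr x p *
          (if (p.1 : ℕ) + (q.1 : ℕ) < k ∧ (p.2 : ℕ) + (q.2 : ℕ) < m then (1 : ZMod 2) else 0))
        = ∑ p : Fin k × Fin m, ∑ p' : Fin k × Fin m,
            B.repr x p * (B.repr (B q)) p' *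
              (if (p.1 : ℕ) + (p'.1 : ℕ) < k ∧ (p.2 : ℕ) + (p'.2 : ℕ) < m then 1 else 0) := by
          refine Finset.sum_congr rfl fun p _ => ?_
          rw [Module.Basis.repr_self]
          rw [Finset.sum_eq_single q]
          · simp
          · intro q' _ hq'
            rw [Finsupp.single_apply, if_neg (by exact fun hh => hq' hh.symm)]
            ring
          · intro hq; exact absurd (Finset.mem_univ q) hq
      _ = 0 := h
  have key : ∀ s : ℕ, ∀ p : Fin k × Fin m, (p.1 : ℕ) + (p.2 : ℕ) = s → B.repr x p = 0 := by
    intro s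
    induction s using Nat.strong_induction_on with
    | _ s ih =>
      intro p hp
      have hk1 : (p.1 : ℕ) < k := p.1.isLt
      have hm1 : (p.2 : ℕ) < m := p.2.isLt
      have h1 := hT (⟨k - 1 - (p.1 : ℕ), by omega⟩, ⟨m - 1 - (p.2 : ℕ), by omega⟩)
      have hiff : ∀ pp : Fin k × Fin m,
          ((pp.1 : ℕ) + (k - 1 - (p.1 : ℕ)) < k ∧ (pp.2 : ℕ) + (m - 1 - (p.2 : ℕ)) < m)
            ↔ ((pp.1 : ℕ) ≤ (p.1 : ℕ) ∧ (pp.2 : ℕ) ≤ (p.2 : ℕ)) := by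
        intro pp
        have := pp.1.isLt; have := pp.2.isLt
        omega
      simp only [hiff] at h1
      rw [Finset.sum_eq_single p] at h1
      · simpa using h1
      · intro q _ hq
        by_cases hc : (q.1 : ℕ) ≤ (p.1 : ℕ) ∧ (q.2 : ℕ) ≤ (p.2 : ℕ)
        · have hne : (q.1 : ℕ) ≠ (p.1 : ℕ) ∨ (q.2 : ℕ) ≠ (p.2 : ℕ) := by
            by_contra hcon
            push_neg at hcon
            exact hq (Prod.ext (Fin.ext hcon.1) (Fin.ext hcon.2))
          have hlt : (q.1 : ℕ) + (q.2 : ℕ) < s := by omega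
          rw [ih _ hlt q rfl, zero_mul]
        · rw [if_neg hc, mul_zero]
      · intro hp'; exact absurd (Finset.mem_univ p) hp'
  have h0 : B.repr x = B.repr 0 := by
    rw [map_zero]
    ext p
    exact key _ p rfl
  exact B.repr.injective h0

end GrayAux

open GrayAux

/-- The Gray map `φ_{km} : R_{k,m}^n → F_2^{kmn}` (with coefficients taken w.r.t. the basis
`u^i v^j`, output blocks indexed by `Fin m × Fin k`) is injective and `F_2`-linear, satisfies
`φ_{km}(C^⊥) = φ_{km}(C)^⊥`, and in particular maps a self-dual code `C` of length `n` over
`R_{k,m}` to a binary self-dual code of length `kmn` whose Hamming weight distribution equals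
the Lee weight distribution of `C` (the Lee weight being `w_L(c) = w_H(φ_{km}(c))`). -/
theorem grayMap_dual_Rkm (k m n : ℕ) (hk : 1 ≤ k) (hm : 1 ≤ m) (hn : 1 ≤ n)
    (B : Module.Basis (Fin k × Fin m) (ZMod 2) (Rkm k m))
    (hB : ∀ p : Fin k × Fin m, B p = Rkm.u k m ^ (p.1 : ℕ) * Rkm.v k m ^ (p.2 : ℕ))
    (φ : (Fin n → Rkm k m) → (Fin m × Fin k × Fin n → ZMod 2))
    (hφ : ∀ a : Fin n → Rkm k m, ∀ q : Fin m × Fin k × Fin n,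
      φ a q = ∑ j ∈ grayInterval m q.1, ∑ i ∈ grayInterval k q.2.1, B.repr (a q.2.2) (i, j))
    (C : Submodule (Rkm k m) (Fin n → Rkm k m)) :
    Function.Injective φ ∧
    (∀ x y : Fin n → Rkm k m, φ (x + y) = φ x + φ y) ∧
    φ '' {b : Fin n → Rkm k m | ∀ a ∈ C, ∑ j, a j * b j = 0} =
      {w : Fin m × Fin k × Fin n → ZMod 2 |
        ∀ x ∈ φ '' (C : Set (Fin n → Rkm k m)), ∑ q, x q * w q = 0} ∧
    ((C : Set (Fin n → Rkm k m)) = {b : Fin n → Rkm k m | ∀ a ∈ C, ∑ j, a j * b j = 0} →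
      φ '' (C : Set (Fin n → Rkm k m)) =
        {w : Fin m × Fin k × Fin n → ZMod 2 |
          ∀ x ∈ φ '' (C : Set (Fin n → Rkm k m)), ∑ q, x q * w q = 0} ∧
      ∀ w : ℕ,
        Set.ncard {c ∈ (C : Set (Fin n → Rkm k m)) | hammingNorm (φ c) = w} =
          Set.ncard {x ∈ φ '' (C : Set (Fin n → Rkm k m)) | hammingNorm x = w}) := by
  classical
  -- φ expressed via F
  have hφF : ∀ a : Fin n → Rkm k m, ∀ tm : Fin m, ∀ tk : Fin k, ∀ jn : Fin n,
      φ a (tm, tk, jn) = F B (a jn) (tm, tk) := by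
    intro a tm tk jn
    rw [hφ a (tm, tk, jn)]
    rfl
  -- global inner product identity
  have hinner : ∀ a b : Fin n → Rkm k m,
      (∑ q : Fin m × Fin k × Fin n, φ a q * φ b q) = sig B (∑ j, a j * b j) := by
    intro a b
    rw [map_sum]
    calc (∑ q : Fin m × Fin k × Fin n, φ a q * φ b q)
        = ∑ tm : Fin m, ∑ tk : Fin k, ∑ jn : Fin n,
            F B (a jn) (tm, tk) * F B (b jn) (tm, tk) := by
          rw [Fintype.sum_prod_type]
          refine Finset.sum_congr rfl fun tm _ => ?_
          rw [Fintype.sum_prod_type]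
          refine Finset.sum_congr rfl fun tk _ => Finset.sum_congr rfl fun jn _ => ?_
          rw [hφF, hφF]
      _ = ∑ tm : Fin m, ∑ jn : Fin n, ∑ tk : Fin k,
            F B (a jn) (tm, tk) * F B (b jn) (tm, tk) := by
          exact Finset.sum_congr rfl fun tm _ => Finset.sum_comm
      _ = ∑ jn : Fin n, ∑ tm : Fin m, ∑ tk : Fin k,
            F B (a jn) (tm, tk) * F B (b jn) (tm, tk) := Finset.sum_comm
      _ = ∑ jn : Fin n, ∑ t : Fin m × Fin k, F B (a jn) t * F B (b jn) t := by
          exact Finset.sum_congr rfl fun jn _ => (Fintype.sum_prod_type (fun t : Fin m × Fin k => F B (a jn) t * F B (b jn) t)).symm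
      _ = ∑ jn : Fin n, sig B (a jn * b jn) := by
          exact Finset.sum_congr rfl fun jn _ => F_inner B hB _ _
  -- φ kills only zero
  have hzero : ∀ x : Fin n → Rkm k m, φ x = 0 → x = 0 := by
    intro x hx
    funext jn
    refine sig_nondeg B hB (x jn) fun y => ?_
    rw [← F_inner B hB]
    refine Finset.sum_eq_zero fun t _ => ?_
    have : F B (x jn) t = 0 := by
      rw [← hφF x t.1 t.2 jn, hx]
      rfl
    rw [this, zero_mul]
  -- additivity
  have hAdd : ∀ x y : Fin n → Rkm k m, φ (x + y) = φ x + φ y := by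
    intro x y
    funext q
    rw [Pi.add_apply, hφ, hφ, hφ]
    rw [← Finset.sum_add_distrib]
    refine Finset.sum_congr rfl fun j _ => ?_
    rw [← Finset.sum_add_distrib]
    refine Finset.sum_congr rfl fun i _ => ?_
    rw [Pi.add_apply, map_add]
    rfl
  have hRself : ∀ r : Rkm k m, r + r = 0 := by
    intro r
    rw [← two_smul (ZMod 2) r, show (2 : ZMod 2) = 0 by decide, zero_smul]
  have hZself : ∀ z : Fin m × Fin k × Fin n → ZMod 2, z + z = 0 := by
    intro z; funext q; rw [Pi.add_apply]; exact (by decide : ∀ a : ZMod 2, a + a = 0) _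
  -- injectivity
  have hinj : Function.Injective φ := by
    intro a b hab
    have h1 : φ (a + b) = 0 := by rw [hAdd, hab]; exact hZself _
    have h2 : a + b = 0 := hzero _ h1
    have h3 : b + b = 0 := by funext j; exact hRself (b j)
    calc a = a + (b + b) := by rw [h3, add_zero]
      _ = (a + b) + b := by rw [add_assoc]
      _ = b := by rw [h2, zero_add]
  -- surjectivity via dimension count
  have hφ0 : φ 0 = 0 := by
    have h := hAdd 0 0
    rw [add_zero] at h
    exact left_eq_add.mp h
  -- linear map packaging
  have hsmul : ∀ (c : ZMod 2) (x : Fin n → Rkm k m), φ (c • x) = c • φ x := by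
    intro c x
    have hc : c = 0 ∨ c = 1 := by revert c; decide
    rcases hc with rfl | rfl
    · rw [zero_smul, zero_smul, hφ0]
    · rw [one_smul, one_smul]
  haveI : Module.Finite (ZMod 2) (Rkm k m) := Module.Finite.of_basis B
  haveI : Module.Free (ZMod 2) (Rkm k m) := Module.Free.of_basis B
  let φL : (Fin n → Rkm k m) →ₗ[ZMod 2] (Fin m × Fin k × Fin n → ZMod 2) :=
    { toFun := φ
      map_add' := hAdd
      map_smul' := fun c x => by rw [RingHom.id_apply]; exact hsmul c x }
  have hfr : Module.finrank (ZMod 2) (Fin n → Rkm k m)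
      = Module.finrank (ZMod 2) (Fin m × Fin k × Fin n → ZMod 2) := by
    rw [Module.finrank_pi_fintype, Module.finrank_pi]
    rw [Module.finrank_eq_card_basis B]
    simp [Fintype.card_prod, mul_comm, mul_assoc, mul_left_comm]
  have hsurj : Function.Surjective φ := by
    have h1 : Function.Injective φL := hinj
    exact (LinearMap.injective_iff_surjective_of_finrank_eq_finrank hfr).mp h1
  -- duality
  have hdual : φ '' {b : Fin n → Rkm k m | ∀ a ∈ C, ∑ j, a j * b j = 0} =
      {w : Fin m × Fin k × Fin n → ZMod 2 |
        ∀ x ∈ φ '' (C : Set (Fin n → Rkm k m)), ∑ q, x q * w q = 0} := by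
    ext w
    constructor
    · rintro ⟨b, hb, rfl⟩ x ⟨a, ha, rfl⟩
      rw [hinner, hb a ha, map_zero]
    · intro hw
      obtain ⟨b, rfl⟩ := hsurj w
      refine ⟨b, fun a ha => ?_, rfl⟩
      refine sig_nondeg B hB _ fun y => ?_
      have h1 : y • a ∈ C := C.smul_mem y ha
      have h2 := hw (φ (y • a)) ⟨_, h1, rfl⟩
      rw [hinner] at h2
      rw [show (∑ j, a j * b j) * y = ∑ j, (y • a) j * b j by
        rw [Finset.sum_mul]
        exact Finset.sum_congr rfl fun j _ => by
          rw [Pi.smul_apply, smul_eq_mul]; ring]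
      exact h2
  refine ⟨hinj, hAdd, hdual, fun hsd => ⟨?_, fun w => ?_⟩⟩
  · conv_lhs => rw [hsd]
    exact hdual
  · have himg : {x ∈ φ '' (C : Set (Fin n → Rkm k m)) | hammingNorm x = w}
        = φ '' {c ∈ (C : Set (Fin n → Rkm k m)) | hammingNorm (φ c) = w} := by
      ext x
      constructor
      · rintro ⟨⟨c, hc, rfl⟩, hw2⟩
        exact ⟨c, ⟨hc, hw2⟩, rfl⟩
      · rintro ⟨c, ⟨hc, hw2⟩, rfl⟩
        exact ⟨⟨c, hc, rfl⟩, hw2⟩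
    rw [himg, Set.ncard_image_of_injective _ hinj]
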